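/- The function u(x,y,t) = c₁(y − t/a − x⁴/(42a)) + (c₂/2)x² + 2c₃√x + (2/5)c₄x^{5/2} + c₅ satisfies the biharmonic heat equation on the paraboloid-type surface with f(x) = (1/2)ln x for x > 0. Specifically, with L(u) = (1/(2x))u_x + u_{xx} + x⁻¹u_{yy}, it holds that u_t = L(L(u)) on {x > 0}. -/

import Mathlib

noncomputable def pdx (u : ℝ → ℝ → ℝ → ℝ) : ℝ → ℝ → ℝ → ℝ :=
  fun x y t => deriv (fun s => u s y t) x

noncomputable def pdy (u : ℝ → ℝ → ℝ → ℝ) : ℝ → ℝ → ℝ → ℝ :=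
  fun x y t => deriv (fun s => u x s t) y

noncomputable def pdt (u : ℝ → ℝ → ℝ → ℝ) : ℝ → ℝ → ℝ → ℝ :=
  fun x y t => deriv (fun s => u x y s) t

/-- The spatial operator for `f x = (1/2) ln x`:
`L u = (1/(2x)) u_x + u_xx + x⁻¹ u_yy`. -/
noncomputable def Lpar (u : ℝ → ℝ → ℝ → ℝ) : ℝ → ℝ → ℝ → ℝ :=
  fun x y t => (1 / (2 * x)) * pdx u x y t + pdx (pdx u) x y t +
    x⁻¹ * pdy (pdy u) x y t

/-- First x-derivative of the explicit solution. -/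
noncomputable def stmt9P1 (a c₁ c₂ c₃ c₄ : ℝ) : ℝ → ℝ := fun s =>
  c₁ * (-(4 * s ^ 3) / (42 * a)) + c₂ * s + c₃ * s ^ (-(1 : ℝ) / 2) +
    c₄ * s ^ ((3 : ℝ) / 2)

/-- Second x-derivative of the explicit solution. -/
noncomputable def stmt9P2 (a c₁ c₂ c₃ c₄ : ℝ) : ℝ → ℝ := fun s =>
  c₁ * (-(12 * s ^ 2) / (42 * a)) + c₂ +
    c₃ * (-(1 : ℝ) / 2 * s ^ (-(1 : ℝ) / 2 - 1)) +
    c₄ * ((3 : ℝ) / 2 * s ^ ((3 : ℝ) / 2 - 1))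

lemma stmt9_hasDerivAt_u (a c₁ c₂ c₃ c₄ c₅ y t : ℝ) {s : ℝ} (hs : 0 < s) :
    HasDerivAt (fun r => c₁ * (y - t / a - r ^ 4 / (42 * a)) + c₂ / 2 * r ^ 2 +
        2 * c₃ * Real.sqrt r + 2 / 5 * c₄ * r ^ ((5 : ℝ) / 2) + c₅)
      (stmt9P1 a c₁ c₂ c₃ c₄ s) s := by
  have h1 : HasDerivAt (fun r : ℝ => c₁ * (y - t / a - r ^ 4 / (42 * a)))
      (c₁ * (-(4 * s ^ 3) / (42 * a))) s := by
    have := (((hasDerivAt_pow 4 s).div_const (42 * a)).const_sub (y - t / a)).const_mul c₁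
    convert this using 1
    · rfl
    · rfl
    push_cast; ring
  have h2 : HasDerivAt (fun r : ℝ => c₂ / 2 * r ^ 2) (c₂ * s) s := by
    have := (hasDerivAt_pow 2 s).const_mul (c₂ / 2)
    convert this using 1
    · rfl
    · rfl
    push_cast; ring
  have hss : Real.sqrt s ≠ 0 := (Real.sqrt_pos.mpr hs).ne'
  have h3 : HasDerivAt (fun r : ℝ => 2 * c₃ * Real.sqrt r) (c₃ * s ^ (-(1 : ℝ) / 2)) s := by
    have := (Real.hasDerivAt_sqrt hs.ne').const_mul (2 * c₃)
    convert this using 1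
    · rfl
    · rfl
    rw [show (-(1 : ℝ) / 2) = -((1 : ℝ) / 2) by norm_num, Real.rpow_neg hs.le,
      ← Real.sqrt_eq_rpow]
    field_simp
  have h4 : HasDerivAt (fun r : ℝ => 2 / 5 * c₄ * r ^ ((5 : ℝ) / 2))
      (c₄ * s ^ ((3 : ℝ) / 2)) s := by
    have := (Real.hasDerivAt_rpow_const (p := (5 : ℝ) / 2) (Or.inl hs.ne')).const_mul
      (2 / 5 * c₄)
    convert this using 1
    · rfl
    · rfl
    rw [show (5 : ℝ) / 2 - 1 = (3 : ℝ) / 2 by norm_num]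
    ring
  exact (((h1.add h2).add h3).add h4).add_const c₅

lemma stmt9_hasDerivAt_P1 (a c₁ c₂ c₃ c₄ : ℝ) {s : ℝ} (hs : 0 < s) :
    HasDerivAt (stmt9P1 a c₁ c₂ c₃ c₄) (stmt9P2 a c₁ c₂ c₃ c₄ s) s := by
  have h1 : HasDerivAt (fun r : ℝ => c₁ * (-(4 * r ^ 3) / (42 * a)))
      (c₁ * (-(12 * s ^ 2) / (42 * a))) s := by
    have := (hasDerivAt_pow 3 s).const_mul (c₁ * (-4) / (42 * a))
    convert this using 1
    · rfl
    · rfl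
    · funext r; ring
    · push_cast; ring
  have h2 : HasDerivAt (fun r : ℝ => c₂ * r) c₂ s := by
    simpa using (hasDerivAt_id s).const_mul c₂
  have h3 : HasDerivAt (fun r : ℝ => c₃ * r ^ (-(1 : ℝ) / 2))
      (c₃ * (-(1 : ℝ) / 2 * s ^ (-(1 : ℝ) / 2 - 1))) s :=
    (Real.hasDerivAt_rpow_const (Or.inl hs.ne')).const_mul c₃
  have h4 : HasDerivAt (fun r : ℝ => c₄ * r ^ ((3 : ℝ) / 2))
      (c₄ * ((3 : ℝ) / 2 * s ^ ((3 : ℝ) / 2 - 1))) s :=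
    (Real.hasDerivAt_rpow_const (Or.inl hs.ne')).const_mul c₄
  exact ((h1.add h2).add h3).add h4

/-- The simplified form of `L u`. -/
lemma stmt9_L_simp (a c₁ c₂ c₃ c₄ : ℝ) {s : ℝ} (hs : 0 < s) :
    (1 / (2 * s)) * stmt9P1 a c₁ c₂ c₃ c₄ s + stmt9P2 a c₁ c₂ c₃ c₄ s =
      c₁ * (-(1 / (3 * a))) * s ^ 2 + 3 * c₂ / 2 + 2 * c₄ * s ^ ((1 : ℝ) / 2) := by
  have e1 : s ^ (-(1 : ℝ) / 2) = s ^ (-(1 : ℝ) / 2 - 1) * s := by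
    rw [← Real.rpow_add_one hs.ne']; norm_num
  have e2 : s ^ ((3 : ℝ) / 2) = s ^ ((1 : ℝ) / 2) * s := by
    rw [← Real.rpow_add_one hs.ne']; norm_num
  have e3 : (3 : ℝ) / 2 - 1 = (1 : ℝ) / 2 := by norm_num
  unfold stmt9P1 stmt9P2
  rw [e1, e2, e3]
  field_simp
  ring

/-- `u = c₁ (y - t/a - x⁴/(42a)) + (c₂/2) x² + 2 c₃ √x
+ (2/5) c₄ x^{5/2} + c₅` solves the biharmonic heat equation
`u_t = L(L u)` with `L = (1/(2x))∂ₓ + ∂ₓₓ + x⁻¹ ∂_{yy}` on `{x > 0}`. -/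
theorem stmt9 (a c₁ c₂ c₃ c₄ c₅ : ℝ) (ha : a ≠ 0)
    (u : ℝ → ℝ → ℝ → ℝ)
    (hu : ∀ x y t, u x y t =
      c₁ * (y - t / a - x ^ 4 / (42 * a)) + c₂ / 2 * x ^ 2 +
        2 * c₃ * Real.sqrt x + 2 / 5 * c₄ * x ^ ((5 : ℝ) / 2) + c₅) :
    ∀ x y t, 0 < x → pdt u x y t = Lpar (Lpar u) x y t := by
  intro x y t hx
  set A : ℝ := c₁ * (-(1 / (3 * a))) with hA
  -- pdx u
  have hpdx : ∀ s : ℝ, 0 < s → ∀ y t : ℝ, pdx u s y t = stmt9P1 a c₁ c₂ c₃ c₄ s := by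
    intro s hs y t
    have h := stmt9_hasDerivAt_u a c₁ c₂ c₃ c₄ c₅ y t hs
    have : (fun r => u r y t) = fun r => c₁ * (y - t / a - r ^ 4 / (42 * a)) +
        c₂ / 2 * r ^ 2 + 2 * c₃ * Real.sqrt r + 2 / 5 * c₄ * r ^ ((5 : ℝ) / 2) + c₅ := by
      funext r; exact hu r y t
    rw [pdx, this]
    exact h.deriv
  -- pdx (pdx u)
  have hpdxx : ∀ s : ℝ, 0 < s → ∀ y t : ℝ,
      pdx (pdx u) s y t = stmt9P2 a c₁ c₂ c₃ c₄ s := by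
    intro s hs y t
    have hev : (fun r => pdx u r y t) =ᶠ[nhds s] stmt9P1 a c₁ c₂ c₃ c₄ := by
      filter_upwards [isOpen_Ioi.mem_nhds (show s ∈ Set.Ioi (0:ℝ) from hs)] with r hr
      exact hpdx r hr y t
    rw [pdx, hev.deriv_eq, (stmt9_hasDerivAt_P1 a c₁ c₂ c₃ c₄ hs).deriv]
  -- pdy u
  have hpdy : ∀ x s t : ℝ, pdy u x s t = c₁ := by
    intro x s t
    have : (fun r => u x r t) = fun r => c₁ * r +
        (c₁ * (-(t / a) - x ^ 4 / (42 * a)) + c₂ / 2 * x ^ 2 + 2 * c₃ * Real.sqrt x +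
          2 / 5 * c₄ * x ^ ((5 : ℝ) / 2) + c₅) := by
      funext r; rw [hu]; ring
    rw [pdy, this]
    have h : HasDerivAt (fun r : ℝ => c₁ * r + (c₁ * (-(t / a) - x ^ 4 / (42 * a)) +
        c₂ / 2 * x ^ 2 + 2 * c₃ * Real.sqrt x + 2 / 5 * c₄ * x ^ ((5 : ℝ) / 2) + c₅))
        c₁ s := by
      simpa using ((hasDerivAt_id s).const_mul c₁).add_const (c₁ * (-(t / a) - x ^ 4 / (42 * a)) +
        c₂ / 2 * x ^ 2 + 2 * c₃ * Real.sqrt x + 2 / 5 * c₄ * x ^ ((5 : ℝ) / 2) + c₅)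
    exact h.deriv
  -- pdy (pdy u) = 0
  have hpdyy : ∀ x s t : ℝ, pdy (pdy u) x s t = 0 := by
    intro x s t
    have : (fun r => pdy u x r t) = fun _ => c₁ := by funext r; exact hpdy x r t
    rw [pdy, this, deriv_const]
  -- L u simplified
  have hL : ∀ s : ℝ, 0 < s → ∀ y t : ℝ,
      Lpar u s y t = A * s ^ 2 + 3 * c₂ / 2 + 2 * c₄ * s ^ ((1 : ℝ) / 2) := by
    intro s hs y t
    rw [Lpar]
    simp only [hpdx s hs, hpdxx s hs, hpdyy, mul_zero, add_zero]
    rw [stmt9_L_simp a c₁ c₂ c₃ c₄ hs]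
  -- derivative of L u
  have hG : ∀ s : ℝ, 0 < s → HasDerivAt
      (fun r => A * r ^ 2 + 3 * c₂ / 2 + 2 * c₄ * r ^ ((1 : ℝ) / 2))
      (A * (2 * s) + 2 * c₄ * ((1 : ℝ) / 2 * s ^ ((1 : ℝ) / 2 - 1))) s := by
    intro s hs
    have h1 : HasDerivAt (fun r : ℝ => A * r ^ 2) (A * (2 * s)) s := by
      have := (hasDerivAt_pow 2 s).const_mul A
      convert this using 1
      · rfl
      · rfl
      push_cast; ring
    have h2 : HasDerivAt (fun r : ℝ => 2 * c₄ * r ^ ((1 : ℝ) / 2))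
        (2 * c₄ * ((1 : ℝ) / 2 * s ^ ((1 : ℝ) / 2 - 1))) s :=
      (Real.hasDerivAt_rpow_const (Or.inl hs.ne')).const_mul (2 * c₄)
    exact (h1.add_const (3 * c₂ / 2)).add h2
  -- pdx (L u)
  have hpdxL : ∀ s : ℝ, 0 < s → ∀ y t : ℝ, pdx (Lpar u) s y t =
      A * (2 * s) + 2 * c₄ * ((1 : ℝ) / 2 * s ^ ((1 : ℝ) / 2 - 1)) := by
    intro s hs y t
    have hev : (fun r => Lpar u r y t) =ᶠ[nhds s]
        (fun r => A * r ^ 2 + 3 * c₂ / 2 + 2 * c₄ * r ^ ((1 : ℝ) / 2)) := by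
      filter_upwards [isOpen_Ioi.mem_nhds (show s ∈ Set.Ioi (0:ℝ) from hs)] with r hr
      exact hL r hr y t
    rw [pdx, hev.deriv_eq, (hG s hs).deriv]
  -- pdx (pdx (L u))
  have hpdxxL : pdx (pdx (Lpar u)) x y t =
      A * 2 + 2 * c₄ * ((1 : ℝ) / 2 * (((1 : ℝ) / 2 - 1) * x ^ ((1 : ℝ) / 2 - 1 - 1))) := by
    have hev : (fun r => pdx (Lpar u) r y t) =ᶠ[nhds x]
        (fun r => A * (2 * r) + 2 * c₄ * ((1 : ℝ) / 2 * r ^ ((1 : ℝ) / 2 - 1))) := by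
      filter_upwards [isOpen_Ioi.mem_nhds (show x ∈ Set.Ioi (0:ℝ) from hx)] with r hr
      exact hpdxL r hr y t
    have h1 : HasDerivAt (fun r : ℝ => A * (2 * r)) (A * 2) x := by
      have he : (fun r : ℝ => A * (2 * r)) = fun r : ℝ => A * 2 * r := by
        funext r; ring
      rw [he]
      simpa using ((hasDerivAt_id x).const_mul (A * 2))
    have h2 : HasDerivAt (fun r : ℝ => 2 * c₄ * ((1 : ℝ) / 2 * r ^ ((1 : ℝ) / 2 - 1)))
        (2 * c₄ * ((1 : ℝ) / 2 * (((1 : ℝ) / 2 - 1) * x ^ ((1 : ℝ) / 2 - 1 - 1)))) x := by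
      have := (Real.hasDerivAt_rpow_const (p := (1 : ℝ) / 2 - 1)
        (Or.inl hx.ne')).const_mul (2 * c₄ * ((1 : ℝ) / 2))
      convert this using 1
      · rfl
      · rfl
      · funext r; ring
      · ring
    rw [pdx, hev.deriv_eq]; exact ((h1.add h2).deriv)
  -- pdy (L u) = 0
  have hpdyL : ∀ s t' : ℝ, pdy (Lpar u) x s t' = 0 := by
    intro s t'
    have : (fun r => Lpar u x r t') =
        fun _ => A * x ^ 2 + 3 * c₂ / 2 + 2 * c₄ * x ^ ((1 : ℝ) / 2) := by
      funext r; exact hL x hx r t'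
    rw [pdy, this, deriv_const]
  have hpdyyL : pdy (pdy (Lpar u)) x y t = 0 := by
    have : (fun r => pdy (Lpar u) x r t) = fun _ => (0 : ℝ) := by
      funext r; exact hpdyL r t
    rw [pdy, this, deriv_const]
  -- pdt u
  have hpdt : pdt u x y t = c₁ * (-(1 / a)) := by
    have : (fun s => u x y s) = fun s => c₁ * (-(1 / a)) * s +
        (c₁ * (y - x ^ 4 / (42 * a)) + c₂ / 2 * x ^ 2 + 2 * c₃ * Real.sqrt x +
          2 / 5 * c₄ * x ^ ((5 : ℝ) / 2) + c₅) := by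
      funext s; rw [hu]; field_simp; ring
    rw [pdt, this]
    have h : HasDerivAt (fun s : ℝ => c₁ * (-(1 / a)) * s +
        (c₁ * (y - x ^ 4 / (42 * a)) + c₂ / 2 * x ^ 2 + 2 * c₃ * Real.sqrt x +
          2 / 5 * c₄ * x ^ ((5 : ℝ) / 2) + c₅)) (c₁ * (-(1 / a))) t := by
      simpa using ((hasDerivAt_id t).const_mul (c₁ * (-(1 / a)))).add_const (c₁ * (y - x ^ 4 / (42 * a)) +
        c₂ / 2 * x ^ 2 + 2 * c₃ * Real.sqrt x + 2 / 5 * c₄ * x ^ ((5 : ℝ) / 2) + c₅)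
    exact h.deriv
  -- assemble
  rw [hpdt, Lpar, hpdxL x hx y t, hpdxxL, hpdyyL, mul_zero, add_zero]
  have e1 : x ^ ((1 : ℝ) / 2 - 1) = x ^ ((1 : ℝ) / 2 - 1 - 1) * x := by
    rw [← Real.rpow_add_one hx.ne']; norm_num
  rw [e1, hA]
  field_simp
  ring
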